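/- (Birkhoff contraction) For a strictly positive matrix A ∈ R^{n×m}_{>0} with projective diameter Δ(A) = max_{i,j,k,l} log( A_{ik} A_{jl} / (A_{il} A_{jk}) ), multiplication by A is a contraction in the Hilbert projective metric with coefficient τ(A) = tanh(Δ(A)/4) < 1: d_H(Ax, Ay) ≤ τ(A) · d_H(x, y) for all x, y ∈ R^m_{>0}. -/

import Mathlib

open Real Finset

private lemma my_tanh_lt_one (z : ℝ) : Real.tanh z < 1 := by
  rw [Real.tanh_eq_sinh_div_cosh, div_lt_one (Real.cosh_pos z)]
  rw [Real.sinh_eq, Real.cosh_eq]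
  have := Real.exp_pos (-z)
  linarith

private lemma my_tanh_eq (Δ : ℝ) :
    Real.tanh (Δ/4) = (Real.exp (Δ/2) - 1) / (Real.exp (Δ/2) + 1) := by
  have h2 : Real.exp (Δ/2) = Real.exp (Δ/4) * Real.exp (Δ/4) := by
    rw [← Real.exp_add]; ring_nf
  have he := Real.exp_pos (Δ/4)
  rw [Real.tanh_eq_sinh_div_cosh, Real.sinh_eq, Real.cosh_eq, Real.exp_neg, h2]
  rw [div_eq_div_iff (by positivity) (by positivity)]
  field_simp

private lemma tv_aux (s P Q : ℝ) (hs : 1 ≤ s) (hP1 : P ≤ 1) (hQ0 : 0 ≤ Q)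
    (hc : P * (1 - Q) ≤ s^2 * (Q * (1 - P))) : P - Q ≤ (s - 1)/(s + 1) := by
  have hs1 : (0:ℝ) < s + 1 := by linarith
  rw [le_div_iff₀ hs1]
  have hkey : (0:ℝ) ≤ (s - 1) * (1 - (s+1)*Q)^2 :=
    mul_nonneg (by linarith) (sq_nonneg _)
  have hden : (0:ℝ) < 1 + (s^2 - 1)*Q := by
    have : 0 ≤ (s^2 - 1) * Q := mul_nonneg (by nlinarith) hQ0
    linarith
  have h1 : (P - Q) * (1 + (s^2-1)*Q) ≤ (s^2-1) * (Q*(1-Q)) := by nlinarith [hc]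
  have h3 : (P - Q) * (1 + (s^2-1)*Q) * (s+1) ≤ (s-1) * (1 + (s^2-1)*Q) :=
    le_trans (mul_le_mul_of_nonneg_right h1 hs1.le) (by nlinarith [hkey])
  nlinarith [h3, hden]

private lemma tv_bound {m : ℕ} [NeZero m] (u v t : Fin m → ℝ) (s L : ℝ)
    (hu : ∀ k, 0 < u k) (hv : ∀ k, 0 < v k) (hs : 1 ≤ s) (hL : 0 ≤ L)
    (huv : ∀ k l, u k * v l ≤ s^2 * (u l * v k))
    (ht : ∀ k l, t k - t l ≤ L) :
    (∑ k, u k * t k)/(∑ k, u k) - (∑ k, v k * t k)/(∑ k, v k) ≤ (s-1)/(s+1) * L := by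
  haveI : Nonempty (Fin m) := ⟨⟨0, Nat.pos_of_ne_zero (NeZero.ne m)⟩⟩
  have hU : 0 < ∑ k, u k := Finset.sum_pos (fun k _ => hu k) Finset.univ_nonempty
  have hV : 0 < ∑ k, v k := Finset.sum_pos (fun k _ => hv k) Finset.univ_nonempty
  set p : Fin m → ℝ := fun k => u k / (∑ k, u k) with hp
  set q : Fin m → ℝ := fun k => v k / (∑ k, v k) with hq
  have hp0 : ∀ k, 0 < p k := fun k => div_pos (hu k) hU
  have hq0 : ∀ k, 0 < q k := fun k => div_pos (hv k) hV
  have hp1 : ∑ k, p k = 1 := by rw [hp, ← Finset.sum_div, div_self hU.ne']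
  have hq1 : ∑ k, q k = 1 := by rw [hq, ← Finset.sum_div, div_self hV.ne']
  have hpq : ∀ k l, p k * q l ≤ s^2 * (p l * q k) := by
    intro k l
    have h := huv k l
    have e1 : p k * q l = (u k * v l) / ((∑ k, u k) * (∑ k, v k)) := by
      rw [hp, hq]; ring
    have e2 : s^2 * (p l * q k) = (s^2 * (u l * v k)) / ((∑ k, u k) * (∑ k, v k)) := by
      rw [hp, hq]; ring
    rw [e1, e2]
    gcongr

  obtain ⟨k0, -, hk0⟩ := Finset.exists_min_image Finset.univ t Finset.univ_nonempty
  set S : Finset (Fin m) := Finset.univ.filter (fun k => q k < p k) with hS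
  have hQP : ∑ k ∈ S, q k ≤ ∑ k ∈ S, p k :=
    Finset.sum_le_sum fun k hk => ((Finset.mem_filter.mp hk).2).le
  have hP1 : ∑ k ∈ S, p k ≤ 1 := by
    rw [← hp1]
    exact Finset.sum_le_sum_of_subset_of_nonneg (Finset.subset_univ _)
      (fun k _ _ => (hp0 k).le)
  have hQ0 : 0 ≤ ∑ k ∈ S, q k := Finset.sum_nonneg fun k _ => (hq0 k).le
  have ep : ∑ l ∈ Sᶜ, p l = 1 - ∑ k ∈ S, p k := by
    have := Finset.sum_add_sum_compl S p
    rw [hp1] at this; linarith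
  have eq' : ∑ l ∈ Sᶜ, q l = 1 - ∑ k ∈ S, q k := by
    have := Finset.sum_add_sum_compl S q
    rw [hq1] at this; linarith
  have hc : (∑ k ∈ S, p k) * (1 - ∑ k ∈ S, q k) ≤
      s^2 * ((∑ k ∈ S, q k) * (1 - ∑ k ∈ S, p k)) := by
    rw [← eq', ← ep, Finset.sum_mul_sum]
    have erhs : s^2 * ((∑ k ∈ S, q k) * (∑ l ∈ Sᶜ, p l)) =
        ∑ k ∈ S, ∑ l ∈ Sᶜ, s^2 * (p l * q k) := by
      rw [Finset.sum_mul_sum, Finset.mul_sum]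
      exact Finset.sum_congr rfl fun k _ => by
        rw [Finset.mul_sum]
        exact Finset.sum_congr rfl fun l _ => by ring
    rw [erhs]
    exact Finset.sum_le_sum fun k _ => Finset.sum_le_sum fun l _ => hpq k l
  have key := tv_aux s (∑ k ∈ S, p k) (∑ k ∈ S, q k) hs hP1 hQ0 hc
  have hLpt : (∑ k, u k * t k)/(∑ k, u k) = ∑ k, p k * t k := by
    rw [Finset.sum_div]
    exact Finset.sum_congr rfl fun k _ => by rw [hp]; ring
  have hLqt : (∑ k, v k * t k)/(∑ k, v k) = ∑ k, q k * t k := by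
    rw [Finset.sum_div]
    exact Finset.sum_congr rfl fun k _ => by rw [hq]; ring
  have emain : (∑ k, p k * t k) - (∑ k, q k * t k) =
      ∑ k, (p k - q k) * (t k - t k0) := by
    have expand : ∀ k : Fin m, (p k - q k) * (t k - t k0) =
        (p k * t k - q k * t k) - (p k * t k0 - q k * t k0) := fun k => by ring
    rw [Finset.sum_congr rfl fun k _ => expand k, Finset.sum_sub_distrib,
      Finset.sum_sub_distrib, Finset.sum_sub_distrib, ← Finset.sum_mul, ← Finset.sum_mul,
      hp1, hq1]
    ring
  have hsplit : ∑ k, (p k - q k) * (t k - t k0) ≤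
      ((∑ k ∈ S, p k) - (∑ k ∈ S, q k)) * L := by
    calc ∑ k, (p k - q k) * (t k - t k0)
        = (∑ k ∈ S, (p k - q k) * (t k - t k0)) +
          (∑ k ∈ Sᶜ, (p k - q k) * (t k - t k0)) :=
          (Finset.sum_add_sum_compl S _).symm
      _ ≤ (∑ k ∈ S, (p k - q k) * L) + 0 := by
          apply add_le_add
          · apply Finset.sum_le_sum
            intro k hk
            have h1 : 0 ≤ p k - q k := by
              have := (Finset.mem_filter.mp hk).2; linarith
            exact mul_le_mul_of_nonneg_left (by linarith [ht k k0]) h1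
          · apply Finset.sum_nonpos
            intro k hk
            have h1 : p k - q k ≤ 0 := by
              have := Finset.mem_compl.mp hk
              rw [hS, Finset.mem_filter] at this
              push_neg at this
              have := this (Finset.mem_univ k)
              linarith
            have h2 : 0 ≤ t k - t k0 := by linarith [hk0 k (Finset.mem_univ k)]
            exact mul_nonpos_of_nonpos_of_nonneg h1 h2
      _ = ((∑ k ∈ S, p k) - (∑ k ∈ S, q k)) * L := by
          rw [add_zero, ← Finset.sum_mul, Finset.sum_sub_distrib]
  rw [hLpt, hLqt, emain]
  calc ∑ k, (p k - q k) * (t k - t k0)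
      ≤ ((∑ k ∈ S, p k) - (∑ k ∈ S, q k)) * L := hsplit
    _ ≤ (s-1)/(s+1) * L := mul_le_mul_of_nonneg_right key hL

private lemma core {m : ℕ} [NeZero m] (a b x y : Fin m → ℝ) (Δ D : ℝ)
    (ha : ∀ k, 0 < a k) (hb : ∀ k, 0 < b k) (hx : ∀ k, 0 < x k) (hy : ∀ k, 0 < y k)
    (hΔ : 0 ≤ Δ) (hD : 1 ≤ D)
    (hab : ∀ k l, a k * b l ≤ Real.exp Δ * (a l * b k))
    (hxy : ∀ k l, x k * y l ≤ D * (x l * y k)) :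
    Real.log (∑ k, a k * x k) + Real.log (∑ k, b k * y k)
      - Real.log (∑ k, a k * y k) - Real.log (∑ k, b k * x k)
      ≤ Real.tanh (Δ/4) * Real.log D := by
  haveI : Nonempty (Fin m) := ⟨⟨0, Nat.pos_of_ne_zero (NeZero.ne m)⟩⟩
  set t : Fin m → ℝ := fun k => Real.log (y k / x k) with htdef
  set F : ℝ → ℝ := fun c =>
    Real.log (∑ k, a k * x k * Real.exp (c * t k)) -
    Real.log (∑ k, b k * x k * Real.exp (c * t k)) with hF
  set G : ℝ → ℝ := fun c =>
    (∑ k, a k * x k * (Real.exp (c * t k) * t k)) / (∑ k, a k * x k * Real.exp (c * t k)) -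
    (∑ k, b k * x k * (Real.exp (c * t k) * t k)) / (∑ k, b k * x k * Real.exp (c * t k))
    with hG
  have hSa : ∀ c : ℝ, 0 < ∑ k, a k * x k * Real.exp (c * t k) :=
    fun c => Finset.sum_pos
      (fun k _ => mul_pos (mul_pos (ha k) (hx k)) (Real.exp_pos _)) Finset.univ_nonempty
  have hSb : ∀ c : ℝ, 0 < ∑ k, b k * x k * Real.exp (c * t k) :=
    fun c => Finset.sum_pos
      (fun k _ => mul_pos (mul_pos (hb k) (hx k)) (Real.exp_pos _)) Finset.univ_nonempty
  have hderiv : ∀ c : ℝ, HasDerivAt F (G c) c := by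
    intro c
    have hA : HasDerivAt (fun c => ∑ k, a k * x k * Real.exp (c * t k))
        (∑ k, a k * x k * (Real.exp (c * t k) * t k)) c := by
      apply HasDerivAt.fun_sum
      intro k _
      have h1 : HasDerivAt (fun c : ℝ => c * t k) (t k) c := hasDerivAt_mul_const _
      have h2 : HasDerivAt (fun c : ℝ => Real.exp (c * t k))
          (Real.exp (c * t k) * t k) c := (Real.hasDerivAt_exp _).comp c h1
      exact h2.const_mul (a k * x k)
    have hB : HasDerivAt (fun c => ∑ k, b k * x k * Real.exp (c * t k))
        (∑ k, b k * x k * (Real.exp (c * t k) * t k)) c := by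
      apply HasDerivAt.fun_sum
      intro k _
      have h1 : HasDerivAt (fun c : ℝ => c * t k) (t k) c := hasDerivAt_mul_const _
      have h2 : HasDerivAt (fun c : ℝ => Real.exp (c * t k))
          (Real.exp (c * t k) * t k) c := (Real.hasDerivAt_exp _).comp c h1
      exact h2.const_mul (b k * x k)
    exact (hA.log (hSa c).ne').sub (hB.log (hSb c).ne')
  obtain ⟨c, -, hceq⟩ := exists_hasDerivAt_eq_slope F G zero_lt_one
    (fun s _ => (hderiv s).continuousAt.continuousWithinAt)
    (fun s _ => hderiv s)
  have hF0 : F 0 = Real.log (∑ k, a k * x k) - Real.log (∑ k, b k * x k) := by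
    rw [hF]
    simp
  have hF1 : F 1 = Real.log (∑ k, a k * y k) - Real.log (∑ k, b k * y k) := by
    rw [hF]
    have e1 : ∀ k : Fin m, a k * x k * Real.exp ((1:ℝ) * t k) = a k * y k := by
      intro k
      rw [htdef, one_mul, Real.exp_log (div_pos (hy k) (hx k))]
      field_simp
      linear_combination a k * y k * mul_inv_cancel₀ (hx k).ne'
    have e2 : ∀ k : Fin m, b k * x k * Real.exp ((1:ℝ) * t k) = b k * y k := by
      intro k
      rw [htdef, one_mul, Real.exp_log (div_pos (hy k) (hx k))]
      field_simp
      linear_combination b k * y k * mul_inv_cancel₀ (hx k).ne'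
    simp only [Finset.sum_congr rfl fun k (_ : k ∈ Finset.univ) => e1 k,
      Finset.sum_congr rfl fun k (_ : k ∈ Finset.univ) => e2 k]
  -- the needed quantity equals -(G c)
  have hs1 : 1 ≤ Real.exp (Δ/2) := Real.one_le_exp (by linarith)
  have htanh : Real.tanh (Δ/4) = (Real.exp (Δ/2) - 1)/(Real.exp (Δ/2) + 1) := my_tanh_eq Δ
  have hGbound : -(G c) ≤ Real.tanh (Δ/4) * Real.log D := by
    have hmain := tv_bound (fun k => b k * x k * Real.exp (c * t k))
      (fun k => a k * x k * Real.exp (c * t k)) t (Real.exp (Δ/2)) (Real.log D)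
      (fun k => mul_pos (mul_pos (hb k) (hx k)) (Real.exp_pos _))
      (fun k => mul_pos (mul_pos (ha k) (hx k)) (Real.exp_pos _)) hs1 (Real.log_nonneg hD)
      (fun k l => by
        have h := hab l k
        have hpos : 0 < x k * Real.exp (c * t k) * (x l * Real.exp (c * t l)) :=
          mul_pos (mul_pos (hx k) (Real.exp_pos _)) (mul_pos (hx l) (Real.exp_pos _))
        have h2 := mul_le_mul_of_nonneg_right h hpos.le
        calc b k * x k * Real.exp (c * t k) * (a l * x l * Real.exp (c * t l))
            = a l * b k * (x k * Real.exp (c * t k) * (x l * Real.exp (c * t l))) := by ring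
          _ ≤ Real.exp Δ * (a k * b l) * (x k * Real.exp (c * t k) * (x l * Real.exp (c * t l))) := h2
          _ = Real.exp (Δ/2) ^ 2 * (b l * x l * Real.exp (c * t l) * (a k * x k * Real.exp (c * t k))) := by
              have hexp : Real.exp (Δ/2) ^ 2 = Real.exp Δ := by
                rw [sq, ← Real.exp_add]; norm_num
              rw [hexp]; ring
      )
      (fun k l => by
        rw [htdef, ← Real.log_div (div_pos (hy k) (hx k)).ne' (div_pos (hy l) (hx l)).ne']
        have harg : (y k / x k) / (y l / x l) ≤ D := by
          have heq : (y k / x k) / (y l / x l) = (y k * x l) / (x k * y l) := by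
            field_simp
          rw [heq, div_le_iff₀ (mul_pos (hx k) (hy l))]
          calc y k * x l = x l * y k := by ring
            _ ≤ D * (x k * y l) := hxy l k
        exact Real.log_le_log
          (div_pos (div_pos (hy k) (hx k)) (div_pos (hy l) (hx l))) harg
      )
    rw [htanh]
    have : -(G c) =
      (∑ k, b k * x k * Real.exp (c * t k) * t k) / (∑ k, b k * x k * Real.exp (c * t k)) -
      (∑ k, a k * x k * Real.exp (c * t k) * t k) / (∑ k, a k * x k * Real.exp (c * t k)) := by
      rw [hG]
      have ea : ∀ k : Fin m, a k * x k * (Real.exp (c * t k) * t k) = a k * x k * Real.exp (c * t k) * t k := fun k => by ring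
      have eb : ∀ k : Fin m, b k * x k * (Real.exp (c * t k) * t k) = b k * x k * Real.exp (c * t k) * t k := fun k => by ring
      simp only [Finset.sum_congr rfl fun k (_ : k ∈ Finset.univ) => ea k,
        Finset.sum_congr rfl fun k (_ : k ∈ Finset.univ) => eb k]
      ring
    rw [this]
    exact hmain
  have hslope : G c = F 1 - F 0 := by rw [hceq]; norm_num
  rw [hF0, hF1] at hslope
  rw [hslope] at hGbound
  linarith [hGbound]

private lemma le_fin_ciSup {p : ℕ} (f : Fin p → ℝ) (i : Fin p) : f i ≤ ⨆ j, f j :=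
  le_ciSup (Set.Finite.bddAbove (Set.finite_range f)) i

/-- Birkhoff contraction: a strictly positive matrix `A` with projective
diameter `Δ(A) = max log (A_ik A_jl / (A_il A_jk))` contracts the Hilbert projective
metric with coefficient `τ(A) = tanh (Δ(A)/4) < 1`. -/
theorem birkhoff_contraction
    (n m : ℕ) [NeZero n] [NeZero m]
    (A : Matrix (Fin n) (Fin m) ℝ) (hA : ∀ i j, 0 < A i j) :
    Real.tanh ((⨆ i, ⨆ j, ⨆ k, ⨆ l, Real.log ((A i k * A j l) / (A i l * A j k))) / 4) < 1 ∧
    ∀ x y : Fin m → ℝ, (∀ j, 0 < x j) → (∀ j, 0 < y j) →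
      Real.log (⨆ i, ⨆ j, (A.mulVec x i * A.mulVec y j) / (A.mulVec x j * A.mulVec y i)) ≤
        Real.tanh ((⨆ i, ⨆ j, ⨆ k, ⨆ l, Real.log ((A i k * A j l) / (A i l * A j k))) / 4) *
          Real.log (⨆ i, ⨆ j, (x i * y j) / (x j * y i)) := by
  haveI hn : Nonempty (Fin n) := ⟨⟨0, Nat.pos_of_ne_zero (NeZero.ne n)⟩⟩
  haveI hm' : Nonempty (Fin m) := ⟨⟨0, Nat.pos_of_ne_zero (NeZero.ne m)⟩⟩
  set Δ := ⨆ i, ⨆ j, ⨆ k, ⨆ l, Real.log ((A i k * A j l) / (A i l * A j k)) with hΔdef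
  have hle : ∀ i j k l, Real.log ((A i k * A j l) / (A i l * A j k)) ≤ Δ := by
    intro i j k l
    rw [hΔdef]
    calc Real.log ((A i k * A j l) / (A i l * A j k))
        ≤ ⨆ l, Real.log ((A i k * A j l) / (A i l * A j k)) :=
          le_fin_ciSup (fun l => Real.log ((A i k * A j l) / (A i l * A j k))) l
      _ ≤ ⨆ k, ⨆ l, Real.log ((A i k * A j l) / (A i l * A j k)) :=
          le_fin_ciSup (fun k => ⨆ l, Real.log ((A i k * A j l) / (A i l * A j k))) k
      _ ≤ ⨆ j, ⨆ k, ⨆ l, Real.log ((A i k * A j l) / (A i l * A j k)) :=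
          le_fin_ciSup (fun j => ⨆ k, ⨆ l, Real.log ((A i k * A j l) / (A i l * A j k))) j
      _ ≤ ⨆ i, ⨆ j, ⨆ k, ⨆ l, Real.log ((A i k * A j l) / (A i l * A j k)) :=
          le_fin_ciSup (fun i => ⨆ j, ⨆ k, ⨆ l, Real.log ((A i k * A j l) / (A i l * A j k))) i
  have hΔ0 : 0 ≤ Δ := by
    have h := hle 0 0 0 0
    rwa [div_self (mul_pos (hA 0 0) (hA 0 0)).ne', Real.log_one] at h
  refine ⟨my_tanh_lt_one _, ?_⟩
  intro x y hx hy
  set D := ⨆ i, ⨆ j, (x i * y j) / (x j * y i) with hDdef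
  have hDle : ∀ i j, (x i * y j) / (x j * y i) ≤ D := by
    intro i j
    rw [hDdef]
    calc (x i * y j) / (x j * y i)
        ≤ ⨆ j, (x i * y j) / (x j * y i) :=
          le_fin_ciSup (fun j => (x i * y j) / (x j * y i)) j
      _ ≤ ⨆ i, ⨆ j, (x i * y j) / (x j * y i) :=
          le_fin_ciSup (fun i => ⨆ j, (x i * y j) / (x j * y i)) i
  have hD1 : 1 ≤ D := by
    have h := hDle 0 0
    rwa [div_self (mul_pos (hx 0) (hy 0)).ne'] at h
  have hAx : ∀ i, 0 < A.mulVec x i :=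
    fun i => Finset.sum_pos (fun k _ => mul_pos (hA i k) (hx k)) Finset.univ_nonempty
  have hAy : ∀ i, 0 < A.mulVec y i :=
    fun i => Finset.sum_pos (fun k _ => mul_pos (hA i k) (hy k)) Finset.univ_nonempty
  have key : ∀ i j, (A.mulVec x i * A.mulVec y j) / (A.mulVec x j * A.mulVec y i) ≤
      Real.exp (Real.tanh (Δ/4) * Real.log D) := by
    intro i j
    have hcore := core (A i) (A j) x y Δ D (fun k => hA i k) (fun k => hA j k) hx hy hΔ0 hD1
      (fun k l => by
        have h := hle i j k l
        have hr : (0:ℝ) < (A i k * A j l) / (A i l * A j k) :=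
          div_pos (mul_pos (hA i k) (hA j l)) (mul_pos (hA i l) (hA j k))
        have h2 := (Real.log_le_iff_le_exp hr).mp h
        exact (div_le_iff₀ (mul_pos (hA i l) (hA j k))).mp h2)
      (fun k l => (div_le_iff₀ (mul_pos (hx l) (hy k))).mp (hDle k l))
    have hnum : (0:ℝ) < A.mulVec x i * A.mulVec y j := mul_pos (hAx i) (hAy j)
    have hden : (0:ℝ) < A.mulVec x j * A.mulVec y i := mul_pos (hAx j) (hAy i)
    have h1 : Real.log ((A.mulVec x i * A.mulVec y j) / (A.mulVec x j * A.mulVec y i)) ≤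
        Real.tanh (Δ/4) * Real.log D := by
      rw [Real.log_div hnum.ne' hden.ne', Real.log_mul (hAx i).ne' (hAy j).ne',
        Real.log_mul (hAx j).ne' (hAy i).ne']
      have e1 : A.mulVec x i = ∑ k, A i k * x k := rfl
      have e2 : A.mulVec y j = ∑ k, A j k * y k := rfl
      have e3 : A.mulVec x j = ∑ k, A j k * x k := rfl
      have e4 : A.mulVec y i = ∑ k, A i k * y k := rfl
      rw [e1, e2, e3, e4]
      linarith [hcore]
    calc (A.mulVec x i * A.mulVec y j) / (A.mulVec x j * A.mulVec y i)
        = Real.exp (Real.log ((A.mulVec x i * A.mulVec y j) / (A.mulVec x j * A.mulVec y i))) :=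
          (Real.exp_log (div_pos hnum hden)).symm
      _ ≤ Real.exp (Real.tanh (Δ/4) * Real.log D) := Real.exp_le_exp.mpr h1
  have hsup_le : (⨆ i, ⨆ j, (A.mulVec x i * A.mulVec y j) / (A.mulVec x j * A.mulVec y i)) ≤
      Real.exp (Real.tanh (Δ/4) * Real.log D) :=
    ciSup_le fun i => ciSup_le fun j => key i j
  have hsup_pos : (0:ℝ) < ⨆ i, ⨆ j, (A.mulVec x i * A.mulVec y j) / (A.mulVec x j * A.mulVec y i) := by
    have h0 : (0:ℝ) < (A.mulVec x 0 * A.mulVec y 0) / (A.mulVec x 0 * A.mulVec y 0) :=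
      div_pos (mul_pos (hAx 0) (hAy 0)) (mul_pos (hAx 0) (hAy 0))
    calc (0:ℝ) < (A.mulVec x 0 * A.mulVec y 0) / (A.mulVec x 0 * A.mulVec y 0) := h0
      _ ≤ ⨆ j, (A.mulVec x 0 * A.mulVec y j) / (A.mulVec x j * A.mulVec y 0) :=
          le_fin_ciSup (fun j => (A.mulVec x 0 * A.mulVec y j) / (A.mulVec x j * A.mulVec y 0)) 0
      _ ≤ ⨆ i, ⨆ j, (A.mulVec x i * A.mulVec y j) / (A.mulVec x j * A.mulVec y i) :=
          le_fin_ciSup (fun i => ⨆ j, (A.mulVec x i * A.mulVec y j) / (A.mulVec x j * A.mulVec y i)) 0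
  exact (Real.log_le_iff_le_exp hsup_pos).mpr hsup_le
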